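/- Let A be a finite set with |A| = q ≥ 2 and let n ≥ 2. There is no n-universal transformation of size n; that is, there is no f : A^n → A^n that simulates every transformation g : A^n → A^n (here m = n and the projection pr is the identity). -/
import Mathlib


/-- The instruction of `A^m` induced by the `i`-th coordinate function of `f`:
it updates register `i` to `f x i` and leaves all other registers unchanged. -/
def instr {A : Type*} {m : ℕ} (f : (Fin m → A) → Fin m → A) (i : Fin m) :
    (Fin m → A) → Fin m → A :=
  fun x => Function.update x i (f x i)

/-- Apply a list of induced instructions of `f`, first element of the list first. -/
def applyInstrs {A : Type*} {m : ℕ} (f : (Fin m → A) → Fin m → A) :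
    List (Fin m) → (Fin m → A) → Fin m → A
  | [], x => x
  | i :: l, x => applyInstrs f l (instr f i x)

/-- Instructions with index not in the word leave that coordinate unchanged. -/
lemma applyInstrs_coord_unchanged {A : Type*} {m : ℕ}
    (f : (Fin m → A) → Fin m → A) (l : List (Fin m)) (i : Fin m) (hi : i ∉ l) :
    ∀ x, applyInstrs f l x i = x i := by
  induction l with
  | nil => intro x; rfl
  | cons j l ih =>
    intro x
    simp only [List.mem_cons, not_or] at hi
    rw [applyInstrs, ih hi.2, instr, Function.update_of_ne hi.1]

/-- If a composition of instructions is injective, each instruction used is injective. -/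
lemma inj_mem {A : Type*} [Fintype A] {m : ℕ}
    (f : (Fin m → A) → Fin m → A) (l : List (Fin m))
    (hinj : Function.Injective (applyInstrs f l)) :
    ∀ j ∈ l, Function.Injective (instr f j) := by
  induction l with
  | nil => simp
  | cons k l ih =>
    intro j hj
    have hk : Function.Injective (instr f k) := by
      intro u v huv
      apply hinj
      show applyInstrs f l (instr f k u) = applyInstrs f l (instr f k v)
      rw [huv]
    rcases List.mem_cons.mp hj with h | h
    · subst h; exact hk
    · refine ih ?_ j h
      have hsurj : Function.Surjective (instr f k) :=
        Finite.injective_iff_surjective.mp hk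
      intro u v huv
      obtain ⟨u', hu⟩ := hsurj u
      obtain ⟨v', hv⟩ := hsurj v
      subst hu; subst hv
      have : applyInstrs f (k :: l) u' = applyInstrs f (k :: l) v' := huv
      rw [hinj this]

/-- If every instruction is injective, every composition is injective. -/
lemma applyInstrs_inj {A : Type*} {m : ℕ}
    (f : (Fin m → A) → Fin m → A) (hall : ∀ j, Function.Injective (instr f j)) :
    ∀ l : List (Fin m), Function.Injective (applyInstrs f l) := by
  intro l
  induction l with
  | nil => intro u v h; exact h
  | cons k l ih =>
    intro u v huv
    exact hall k (ih huv)

/-- There is no `n`-universal transformation of size `n`: no transformation `f` of `A^n`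
simulates every transformation `g` of `A^n` (with `m = n` the projection is the identity,
so simulation means `g` equals a nonempty composition of instructions induced by `f`). -/
theorem no_universal_of_size_n (q n : ℕ) (hq : 2 ≤ q) (hn : 2 ≤ n)
    (A : Type*) [Fintype A] (hA : Fintype.card A = q) :
    ¬ ∃ f : (Fin n → A) → Fin n → A,
        ∀ g : (Fin n → A) → Fin n → A,
          ∃ l : List (Fin n), l ≠ [] ∧ ∀ x, g x = applyInstrs f l x := by
  rintro ⟨f, hf⟩
  classical
  obtain ⟨a, b, hab⟩ := Fintype.exists_pair_of_one_lt_card (by omega : 1 < Fintype.card A)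
  -- every instruction is injective
  have hall : ∀ i, Function.Injective (instr f i) := by
    intro i
    -- g : swap a b on coordinate i, an involution hence injective
    set g : (Fin n → A) → Fin n → A :=
      fun x => Function.update x i (Equiv.swap a b (x i)) with hg
    have ginv : Function.Involutive g := by
      intro x
      funext k
      by_cases hk : k = i
      · subst hk
        simp [hg, Function.update_self, Equiv.swap_apply_self]
      · simp [hg, Function.update_of_ne hk]
    obtain ⟨l, hl, hgl⟩ := hf g
    have hgi : g = applyInstrs f l := funext hgl
    have hli : i ∈ l := by
      by_contra hi
      have h1 := applyInstrs_coord_unchanged f l i hi (fun _ => a)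
      rw [← hgi] at h1
      simp [hg, Function.update_self, Equiv.swap_apply_left] at h1
      exact hab h1.symm
    have ginj : Function.Injective (applyInstrs f l) := by
      rw [← hgi]; exact ginv.injective
    exact inj_mem f l ginj i hli
  -- but the constant map is simulated and must then be injective
  obtain ⟨l, hl, hgl⟩ := hf (fun _ _ => a)
  have hinj : Function.Injective (applyInstrs f l) := applyInstrs_inj f hall l
  have h1 : applyInstrs f l (fun _ => a) = applyInstrs f l (fun _ => b) := by
    rw [← hgl, ← hgl]
  have h2 := hinj h1
  have : a = b := congrFun h2 ⟨0, by omega⟩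
  exact hab this
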